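/- Assume that $\mathcal S$ is primitive and let $x'$ be a finite patch with $x'\subseteq S^n_{\bar a}(D)$ for some $n>0$ and tile $D\in\mathcal P^1(X)$. Then there exists $R>0$ such that for every $\bar b\in\Sigma$ with $d_\Sigma(\bar a,\bar b)<1/n$, every tiling $x\in X_{\bar b}$ and every closed ball $B\subseteq\mathbb R^d$ of radius $R$, there is $\vec t\in\mathbb R^d$ with $\vec t+x'\subset x$ and $\operatorname{supp}(\vec t+x')\subseteq B$. -/

import Mathlib

open Filter Topology Set Metric MeasureTheory

noncomputable section

/-- Points of `ℝ^d`. -/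
abbrev Pt (d : ℕ) := EuclideanSpace ℝ (Fin d)

/-- A patch is a collection of subsets of `ℝ^d` (intended: tiles with disjoint interiors). -/
abbrev Patch (d : ℕ) := Set (Set (Pt d))

/-- Translation of a single tile. -/
def tileTrans {d : ℕ} (t : Pt d) (D : Set (Pt d)) : Set (Pt d) := (fun p => t + p) '' D

/-- Translation of a patch, `t + x`. -/
def patchTrans {d : ℕ} (t : Pt d) (x : Patch d) : Patch d := tileTrans t '' x

/-- A tile: compact, connected, and the closure of its interior. -/
def IsTile {d : ℕ} (D : Set (Pt d)) : Prop :=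
  IsCompact D ∧ IsConnected D ∧ D = closure (interior D)

/-- A patch: a collection of tiles with pairwise disjoint interiors. -/
def IsPatch {d : ℕ} (x : Patch d) : Prop :=
  (∀ D ∈ x, IsTile D) ∧
  ∀ D ∈ x, ∀ D' ∈ x, D ≠ D' → interior D ∩ interior D' = ∅

/-- The support of a patch: the union of its tiles. -/
def psupp {d : ℕ} (x : Patch d) : Set (Pt d) := ⋃ D ∈ x, D

/-- A tiling of `ℝ^d`: a patch whose support is all of `ℝ^d`. -/
def IsTiling {d : ℕ} (x : Patch d) : Prop := IsPatch x ∧ psupp x = univ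

/-- The tiles occurring in tilings of `X`. -/
def TilesOf {d : ℕ} (X : Set (Patch d)) : Set (Set (Pt d)) := {D | ∃ x ∈ X, D ∈ x}

/-- `𝒫(X)`: the finite patches contained in tilings of `X`. -/
def Patches {d : ℕ} (X : Set (Patch d)) : Set (Patch d) :=
  {x' | x'.Finite ∧ ∃ x ∈ X, x' ⊆ x}

/-- `𝒫^N(X)`: the patches with `N` tiles contained in tilings of `X`. -/
def PatchesCard {d : ℕ} (X : Set (Patch d)) (N : ℕ) : Set (Patch d) :=
  {x' | x'.Finite ∧ x'.ncard = N ∧ ∃ x ∈ X, x' ⊆ x}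

/-- `X` is invariant under the translation action. -/
def TransInvariant {d : ℕ} (X : Set (Patch d)) : Prop :=
  ∀ t : Pt d, ∀ x ∈ X, patchTrans t x ∈ X

/-- Finite local complexity: for each `N` there are only finitely many `N`-tile patches
in tilings of `X` up to translation. -/
def FLC {d : ℕ} (X : Set (Patch d)) : Prop :=
  ∀ N : ℕ, ∃ F : Finset (Patch d),
    ∀ x' ∈ PatchesCard X N, ∃ y ∈ F, ∃ t : Pt d, patchTrans t y = x'

/-- The tiling metric `d_T`. -/
def dT {d : ℕ} (x y : Patch d) : ℝ :=
  sInf ({Real.sqrt 2 / 2} ∪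
    {r : ℝ | 0 < r ∧ r < Real.sqrt 2 / 2 ∧
      ∃ x' ⊆ x, ∃ y' ⊆ y,
        Bornology.IsBounded (psupp x') ∧ Bornology.IsBounded (psupp y') ∧
        closedBall (0 : Pt d) (1 / r) ⊆ psupp x' ∧
        closedBall (0 : Pt d) (1 / r) ⊆ psupp y' ∧
        ∃ t : Pt d, ‖t‖ ≤ r ∧ patchTrans t x' = y'})

/-- A (self-similar) substitution on the tiles of `X`, with dilatation factor `lam`,
extended tile-by-tile to patches, mapping finite patches of `X` to finite patches of `X`
and tilings of `X` to tilings of `X`. -/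
structure Substitution (d : ℕ) (X : Set (Patch d)) where
  map : Set (Pt d) → Patch d
  lam : ℝ
  one_lt_lam : 1 < lam
  supp_eq : ∀ D ∈ TilesOf X, psupp (map D) = (fun p => lam • p) '' D
  equivar : ∀ (t : Pt d) (D : Set (Pt d)), map (tileTrans t D) = patchTrans (lam • t) (map D)
  maps_patches : ∀ x' ∈ Patches X, (⋃ D ∈ x', map D) ∈ Patches X
  maps_X : ∀ x ∈ X, (⋃ D ∈ x, map D) ∈ X

/-- A substitution applied to a patch, tile by tile. -/
def substPatch {d : ℕ} {X : Set (Patch d)} (S : Substitution d X) (x : Patch d) : Patch d :=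
  ⋃ D ∈ x, S.map D

/-- The structure matrix of a substitution with respect to prototiles `Dp`:
entry `(i,j)` is the number of tiles equivalent (translation-equal) to `Dp i` in `S (Dp j)`. -/
def structMat {d l : ℕ} {X : Set (Patch d)} (Dp : Fin l → Set (Pt d)) (S : Substitution d X) :
    Matrix (Fin l) (Fin l) ℕ :=
  fun i j => {D | D ∈ S.map (Dp j) ∧ ∃ t : Pt d, D = tileTrans t (Dp i)}.ncard

/-- `Dp` is a complete family of pairwise non-equivalent prototiles of `X`. -/
def IsPrototileBasis {d l : ℕ} (X : Set (Patch d)) (Dp : Fin l → Set (Pt d)) : Prop :=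
  (∀ i, Dp i ∈ TilesOf X) ∧
  (∀ i j, i ≠ j → ∀ t : Pt d, tileTrans t (Dp i) ≠ Dp j) ∧
  ∀ D ∈ TilesOf X, ∃ i, ∃ t : Pt d, tileTrans t (Dp i) = D

/-- `S^n_ā = S_{a_1} ∘ S_{a_2} ∘ ⋯ ∘ S_{a_n}` acting on patches (`a 0` plays the role
of `a_1`). -/
def substSeq {d k : ℕ} {X : Set (Patch d)} (S : Fin k → Substitution d X) :
    (ℕ → Fin k) → ℕ → Patch d → Patch d
  | _, 0 => id
  | a, n + 1 => fun x => substPatch (S (a 0)) (substSeq S (fun i => a (i + 1)) n x)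

/-- `A^n_ā = A_{a_1} A_{a_2} ⋯ A_{a_n}`. -/
def matSeq {l k : ℕ} (A : Fin k → Matrix (Fin l) (Fin l) ℕ) :
    (ℕ → Fin k) → ℕ → Matrix (Fin l) (Fin l) ℕ
  | _, 0 => 1
  | a, n + 1 => A (a 0) * matSeq A (fun i => a (i + 1)) n

/-- Primitivity of the sequence of structure matrices `(A_{a_n})`: for every `n` some
product `A_{a_n} A_{a_{n+1}} ⋯ A_{a_{n+N}}` has all entries positive. -/
def SeqPrimitive {l k : ℕ} (A : Fin k → Matrix (Fin l) (Fin l) ℕ) (a : ℕ → Fin k) : Prop :=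
  ∀ n : ℕ, ∃ N : ℕ, ∀ p q : Fin l, 0 < matSeq A (fun m => a (n + m)) (N + 1) p q

/-- The multi-substitution tiling space `X_ā` (with initial tile `D`). -/
def multiSpace {d k : ℕ} {X : Set (Patch d)} (S : Fin k → Substitution d X) (a : ℕ → Fin k)
    (D : Set (Pt d)) : Set (Patch d) :=
  {x | x ∈ X ∧ ∀ x' ⊆ x, x'.Finite →
    ∃ n : ℕ, 0 < n ∧ ∃ t : Pt d, patchTrans t x' ⊆ substSeq S a n {D}}

/-- The substitution tiling space of a single substitution, given by its action
`F` on patches (with initial tile `D`). -/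
def substSpaceF {d : ℕ} (X : Set (Patch d)) (F : Patch d → Patch d) (D : Set (Pt d)) :
    Set (Patch d) :=
  {x | x ∈ X ∧ ∀ x' ⊆ x, x'.Finite →
    ∃ m : ℕ, 0 < m ∧ ∃ t : Pt d, patchTrans t x' ⊆ F^[m] {D}}

open Classical in
/-- The metric on `Σ = {1,…,k}^ℕ`: `d(ā,b̄) = 1/L` where `L` is the least (1-indexed)
position where the sequences differ, and `0` if they are equal. -/
def dSigma {k : ℕ} (a b : ℕ → Fin k) : ℝ :=
  if h : ∃ n, a n ≠ b n then 1 / ((Nat.find h : ℝ) + 1) else 0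

/-- The shift `σ` on `Σ`. -/
def seqShift {k : ℕ} (a : ℕ → Fin k) : ℕ → Fin k := fun n => a (n + 1)

/-- A substitution is recognizable if it is injective on `X`. -/
def Recognizable {d : ℕ} {X : Set (Patch d)} (S : Substitution d X) : Prop :=
  ∀ x ∈ X, ∀ y ∈ X, substPatch S x = substPatch S y → x = y

/-- A substitution is strongly recognizable if it is recognizable and `S(D') ⊆ S(x)`
implies `D' ∈ x` for every tiling `x ∈ X` and tile `D'`. -/
def StronglyRecognizable {d : ℕ} {X : Set (Patch d)} (S : Substitution d X) : Prop :=
  Recognizable S ∧ ∀ x ∈ X, ∀ D' ∈ TilesOf X, S.map D' ⊆ substPatch S x → D' ∈ x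

/-- `L_{x'}(y')`: the number of translated copies of `x'` contained in `y'`. -/
def Lcount {d : ℕ} (x' y' : Patch d) : ℕ := {t : Pt d | patchTrans t x' ⊆ y'}.ncard

/-- The Euclidean volume of the support of a patch. -/
def pvol {d : ℕ} (y' : Patch d) : ℝ := (volume (psupp y')).toReal

/-- `L^x_{x'}(H)`: the number of translated copies of `x'` contained in `x` whose support
is contained in `H`. -/
def LcountIn {d : ℕ} (x x' : Patch d) (H : Set (Pt d)) : ℕ :=
  {t : Pt d | patchTrans t x' ⊆ x ∧ psupp (patchTrans t x') ⊆ H}.ncard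

/-- `H^{+r}`: the set of points at distance at most `r` from `H`. -/
def plusR {d : ℕ} (H : Set (Pt d)) (r : ℝ) : Set (Pt d) := {t | ∃ h ∈ H, dist t h ≤ r}

/-- Van Hove sequence of subsets of `ℝ^d`. -/
def VanHove {d : ℕ} (H : ℕ → Set (Pt d)) : Prop :=
  ∀ r : ℝ, 0 ≤ r →
    Tendsto (fun n => (volume (plusR (frontier (H n)) r)).toReal / (volume (H n)).toReal)
      atTop (nhds 0)

/-- A tiling of `X_ā` which is an increasing union of translates of the supertiles
`S^{k_n}_ā(D)`. -/
def Hierarchical {d k : ℕ} {X : Set (Patch d)} (S : Fin k → Substitution d X) (a : ℕ → Fin k)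
    (x : Patch d) : Prop :=
  ∃ (kn : ℕ → ℕ) (tn : ℕ → Pt d) (D : Set (Pt d)), D ∈ TilesOf X ∧
    Tendsto kn atTop atTop ∧
    (∀ n, patchTrans (tn n) (substSeq S a (kn n) {D}) ⊆
      patchTrans (tn (n + 1)) (substSeq S a (kn (n + 1)) {D})) ∧
    x = ⋃ n, patchTrans (tn n) (substSeq S a (kn n) {D})

/-- The topology on the space of patches generated by the `d_T`-balls. -/
def tilingTopology (d : ℕ) : TopologicalSpace (Patch d) :=
  TopologicalSpace.generateFrom {U | ∃ (x : Patch d) (r : ℝ), 0 < r ∧ U = {y | dT x y < r}}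

/-- The Borel σ-algebra associated to the tiling topology. -/
def tilingMeasurable (d : ℕ) : MeasurableSpace (Patch d) :=
  @borel (Patch d) (tilingTopology d)

/-- A Borel probability measure concentrated on `Y` and invariant under the translation
action. -/
def GoodMeasure {d : ℕ} (Y : Set (Patch d))
    (μ : @MeasureTheory.Measure (Patch d) (tilingMeasurable d)) : Prop :=
  letI := tilingMeasurable d
  μ Set.univ = 1 ∧ μ Yᶜ = 0 ∧
    ∀ (t : Pt d) (s : Set (Patch d)), μ (patchTrans t ⁻¹' s) = μ s

/-- `ν` is the pushforward of `μ` under `F`. -/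
def PushForwardEq {d : ℕ} (F : Patch d → Patch d)
    (μ ν : @MeasureTheory.Measure (Patch d) (tilingMeasurable d)) : Prop :=
  letI := tilingMeasurable d
  ∀ s : Set (Patch d), μ (F ⁻¹' s) = ν s

section Aux

variable {d k l : ℕ} {X : Set (Patch d)}

lemma tileTrans_tileTrans (s t : Pt d) (D : Set (Pt d)) :
    tileTrans s (tileTrans t D) = tileTrans (s + t) D := by
  simp only [tileTrans, Set.image_image, add_assoc]

lemma tileTrans_zero (D : Set (Pt d)) : tileTrans (0 : Pt d) D = D := by
  simp [tileTrans]

lemma patchTrans_patchTrans (s t : Pt d) (x : Patch d) :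
    patchTrans s (patchTrans t x) = patchTrans (s + t) x := by
  simp only [patchTrans, Set.image_image, tileTrans_tileTrans]

lemma patchTrans_zero (x : Patch d) : patchTrans (0 : Pt d) x = x := by
  have : tileTrans (0 : Pt d) = id := funext tileTrans_zero
  simp [patchTrans, this]

lemma patchTrans_mono {x y : Patch d} (t : Pt d) (h : x ⊆ y) :
    patchTrans t x ⊆ patchTrans t y := Set.image_mono h

lemma patchTrans_singleton (t : Pt d) (D : Set (Pt d)) :
    patchTrans t {D} = {tileTrans t D} := by simp [patchTrans]

lemma mem_patchTrans {t : Pt d} {x : Patch d} {Q : Set (Pt d)} :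
    Q ∈ patchTrans t x ↔ ∃ P ∈ x, tileTrans t P = Q := by
  simp [patchTrans, eq_comm]

lemma mem_psupp {x : Patch d} {p : Pt d} : p ∈ psupp x ↔ ∃ D ∈ x, p ∈ D := by
  simp [psupp]

lemma subset_psupp {x : Patch d} {D : Set (Pt d)} (h : D ∈ x) : D ⊆ psupp x :=
  fun p hp => mem_psupp.2 ⟨D, h, hp⟩

lemma psupp_mono {x y : Patch d} (h : x ⊆ y) : psupp x ⊆ psupp y := by
  intro p hp; rcases mem_psupp.1 hp with ⟨D, hD, hpD⟩; exact mem_psupp.2 ⟨D, h hD, hpD⟩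

lemma psupp_patchTrans (t : Pt d) (x : Patch d) :
    psupp (patchTrans t x) = (fun p => t + p) '' psupp x := by
  ext p
  simp only [mem_psupp, mem_patchTrans, Set.mem_image]
  constructor
  · rintro ⟨Q, ⟨P, hP, rfl⟩, hpQ⟩
    rcases hpQ with ⟨q, hq, rfl⟩
    exact ⟨q, ⟨P, hP, hq⟩, rfl⟩
  · rintro ⟨q, hq, rfl⟩
    rcases hq with ⟨P, hP, hqP⟩
    exact ⟨tileTrans t P, ⟨P, hP, rfl⟩, ⟨q, hqP, rfl⟩⟩

lemma psupp_biUnion {x : Patch d} (f : Set (Pt d) → Patch d) :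
    psupp (⋃ E ∈ x, f E) = ⋃ E ∈ x, psupp (f E) := by
  ext p; simp only [mem_psupp, Set.mem_iUnion, mem_psupp]
  constructor
  · rintro ⟨D, ⟨E, hE, hD⟩, hpD⟩
    exact ⟨E, hE, D, hD, hpD⟩
  · rintro ⟨E, hE, D, hD, hpD⟩
    exact ⟨D, ⟨E, hE, hD⟩, hpD⟩

end Aux
section Aux2

variable {d k l : ℕ} {X : Set (Patch d)}

lemma substSeq_zero (S : Fin k → Substitution d X) (a : ℕ → Fin k) (x : Patch d) :
    substSeq S a 0 x = x := rfl

lemma substSeq_succ (S : Fin k → Substitution d X) (a : ℕ → Fin k) (m : ℕ) (x : Patch d) :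
    substSeq S a (m + 1) x = substPatch (S (a 0)) (substSeq S (fun i => a (i + 1)) m x) := rfl

lemma substPatch_mono {Su : Substitution d X} {x y : Patch d} (h : x ⊆ y) :
    substPatch Su x ⊆ substPatch Su y := by
  intro Q hQ
  simp only [substPatch, Set.mem_iUnion] at hQ ⊢
  rcases hQ with ⟨D, hD, hQD⟩
  exact ⟨D, h hD, hQD⟩

lemma substSeq_mono (S : Fin k → Substitution d X) (a : ℕ → Fin k) (m : ℕ)
    {x y : Patch d} (h : x ⊆ y) : substSeq S a m x ⊆ substSeq S a m y := by
  induction m generalizing a x y with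
  | zero => exact h
  | succ m ih => exact substPatch_mono (ih _ h)

lemma substSeq_congr (S : Fin k → Substitution d X) {a b : ℕ → Fin k} {m : ℕ}
    (h : ∀ i < m, a i = b i) (x : Patch d) : substSeq S a m x = substSeq S b m x := by
  induction m generalizing a b x with
  | zero => rfl
  | succ m ih =>
    rw [substSeq_succ, substSeq_succ, h 0 (Nat.succ_pos _),
      ih (fun i hi => h (i + 1) (Nat.succ_lt_succ hi)) x]

lemma substSeq_add (S : Fin k → Substitution d X) (a : ℕ → Fin k) (p q : ℕ) (x : Patch d) :
    substSeq S a (p + q) x = substSeq S a p (substSeq S (fun i => a (i + p)) q x) := by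
  induction p generalizing a with
  | zero => simp [substSeq_zero]
  | succ p ih =>
    have h1 : p + 1 + q = (p + q) + 1 := by omega
    have h2 : (fun i => (fun j => a (j + 1)) (i + p)) = (fun i => a (i + (p + 1))) := by
      funext i; congr 1
    rw [h1, substSeq_succ, ih (fun i => a (i + 1)), h2, substSeq_succ]

lemma substPatch_biUnion (Su : Substitution d X) {x : Patch d} (f : Set (Pt d) → Patch d) :
    substPatch Su (⋃ E ∈ x, f E) = ⋃ E ∈ x, substPatch Su (f E) := by
  ext Q
  simp only [substPatch, Set.mem_iUnion]
  constructor
  · rintro ⟨D, ⟨E, hE, hD⟩, hQ⟩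
    exact ⟨E, hE, D, hD, hQ⟩
  · rintro ⟨E, hE, D, hD, hQ⟩
    exact ⟨D, ⟨E, hE, hD⟩, hQ⟩

lemma substSeq_biUnion (S : Fin k → Substitution d X) (a : ℕ → Fin k) (m : ℕ) (x : Patch d) :
    substSeq S a m x = ⋃ E ∈ x, substSeq S a m {E} := by
  induction m generalizing a x with
  | zero => simp [substSeq_zero]
  | succ m ih =>
    rw [substSeq_succ, ih, substPatch_biUnion]
    apply Set.iUnion₂_congr
    intro E hE
    rw [substSeq_succ]

lemma substPatch_patchTrans (Su : Substitution d X) (t : Pt d) (x : Patch d) :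
    substPatch Su (patchTrans t x) = patchTrans (Su.lam • t) (substPatch Su x) := by
  ext Q
  simp only [substPatch, mem_patchTrans, Set.mem_iUnion, mem_patchTrans]
  constructor
  · rintro ⟨D, ⟨P, hP, rfl⟩, hQ⟩
    rw [Su.equivar t P] at hQ
    rcases mem_patchTrans.1 hQ with ⟨Q', hQ', rfl⟩
    exact ⟨Q', ⟨P, hP, hQ'⟩, rfl⟩
  · rintro ⟨Q', ⟨P, hP, hQ'⟩, rfl⟩
    refine ⟨tileTrans t P, ⟨P, hP, rfl⟩, ?_⟩
    rw [Su.equivar t P]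
    exact mem_patchTrans.2 ⟨Q', hQ', rfl⟩

/-- Product of the dilatation factors along the first `m` letters. -/
def lamProd (S : Fin k → Substitution d X) (a : ℕ → Fin k) (m : ℕ) : ℝ :=
  ∏ i ∈ Finset.range m, (S (a i)).lam

lemma lamProd_zero (S : Fin k → Substitution d X) (a : ℕ → Fin k) : lamProd S a 0 = 1 := by
  simp [lamProd]

lemma lamProd_succ' (S : Fin k → Substitution d X) (a : ℕ → Fin k) (m : ℕ) :
    lamProd S a (m + 1) = (S (a 0)).lam * lamProd S (fun i => a (i + 1)) m := by
  rw [lamProd, Finset.prod_range_succ', mul_comm]; rfl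

lemma lamProd_pos (S : Fin k → Substitution d X) (a : ℕ → Fin k) (m : ℕ) :
    0 < lamProd S a m := by
  apply Finset.prod_pos
  intro i _
  exact lt_trans one_pos (S (a i)).one_lt_lam

lemma substSeq_patchTrans (S : Fin k → Substitution d X) (a : ℕ → Fin k) (m : ℕ)
    (t : Pt d) (x : Patch d) :
    substSeq S a m (patchTrans t x) = patchTrans (lamProd S a m • t) (substSeq S a m x) := by
  induction m generalizing a t x with
  | zero => simp [substSeq_zero, lamProd_zero]
  | succ m ih =>
    rw [substSeq_succ, ih, substPatch_patchTrans, substSeq_succ, lamProd_succ', smul_smul]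

end Aux2
section Aux3

variable {d k l : ℕ} {X : Set (Patch d)}

lemma singleton_mem_Patches {D : Set (Pt d)} (hD : D ∈ TilesOf X) : ({D} : Patch d) ∈ Patches X := by
  rcases hD with ⟨z, hz, hDz⟩
  exact ⟨Set.finite_singleton _, z, hz, Set.singleton_subset_iff.2 hDz⟩

lemma mem_TilesOf_of_mem_Patches {x' : Patch d} (h : x' ∈ Patches X) {P : Set (Pt d)}
    (hP : P ∈ x') : P ∈ TilesOf X := by
  rcases h with ⟨-, z, hz, hsub⟩
  exact ⟨z, hz, hsub hP⟩

lemma substPatch_mem_Patches (Su : Substitution d X) {x' : Patch d} (h : x' ∈ Patches X) :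
    substPatch Su x' ∈ Patches X := Su.maps_patches x' h

lemma substSeq_mem_Patches (S : Fin k → Substitution d X) (a : ℕ → Fin k) (m : ℕ)
    {x' : Patch d} (h : x' ∈ Patches X) : substSeq S a m x' ∈ Patches X := by
  induction m generalizing a with
  | zero => exact h
  | succ m ih => exact substPatch_mem_Patches _ (ih _)

lemma isTile_of_mem_TilesOf (hX : ∀ x ∈ X, IsTiling x) {E : Set (Pt d)}
    (hE : E ∈ TilesOf X) : IsTile E := by
  rcases hE with ⟨z, hz, hEz⟩
  exact (hX z hz).1.1 E hEz

lemma interior_nonempty_of_isTile {E : Set (Pt d)} (hE : IsTile E) :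
    (interior E).Nonempty := by
  by_contra h
  rw [Set.not_nonempty_iff_eq_empty] at h
  have : E = ∅ := by rw [hE.2.2, h, closure_empty]
  exact hE.2.1.nonempty.ne_empty this

lemma tileTrans_eq_homeomorph (t : Pt d) (D : Set (Pt d)) :
    tileTrans t D = (Homeomorph.addLeft t) '' D := rfl

lemma isTile_tileTrans {E : Set (Pt d)} (t : Pt d) (hE : IsTile E) :
    IsTile (tileTrans t E) := by
  refine ⟨hE.1.image (continuous_const.add continuous_id), hE.2.1.image _
    (continuous_const.add continuous_id).continuousOn, ?_⟩
  rw [tileTrans_eq_homeomorph]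
  conv_lhs => rw [hE.2.2]
  rw [Homeomorph.image_closure, Homeomorph.image_interior]

lemma interior_tileTrans (t : Pt d) (E : Set (Pt d)) :
    interior (tileTrans t E) = tileTrans t (interior E) := by
  rw [tileTrans_eq_homeomorph, tileTrans_eq_homeomorph, Homeomorph.image_interior]

lemma diam_tileTrans (t : Pt d) (E : Set (Pt d)) :
    Metric.diam (tileTrans t E) = Metric.diam E := by
  have hiso : Isometry (fun p : Pt d => t + p) :=
    Isometry.of_dist_eq (fun p q => dist_add_left t p q)
  exact hiso.diam_image E

lemma bounded_of_isTile {E : Set (Pt d)} (hE : IsTile E) : Bornology.IsBounded E :=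
  hE.1.isBounded

end Aux3
section Aux4

variable {d k l : ℕ} {X : Set (Patch d)}

lemma psupp_substPatch (Su : Substitution d X) {x : Patch d}
    (h : ∀ D ∈ x, D ∈ TilesOf X) :
    psupp (substPatch Su x) = (fun p => Su.lam • p) '' psupp x := by
  have : substPatch Su x = ⋃ D ∈ x, Su.map D := rfl
  rw [this, psupp_biUnion]
  have h2 : ⋃ D ∈ x, psupp (Su.map D) = ⋃ D ∈ x, (fun p => Su.lam • p) '' D := by
    apply Set.iUnion₂_congr
    intro D hD
    exact Su.supp_eq D (h D hD)
  rw [h2, psupp, ← Set.image_iUnion₂]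

lemma psupp_substSeq (S : Fin k → Substitution d X) (a : ℕ → Fin k) (m : ℕ)
    {x' : Patch d} (h : x' ∈ Patches X) :
    psupp (substSeq S a m x') = (fun p => lamProd S a m • p) '' psupp x' := by
  induction m generalizing a with
  | zero =>
    rw [substSeq_zero, lamProd_zero]
    simp
  | succ m ih =>
    rw [substSeq_succ, psupp_substPatch _ (fun D hD =>
        mem_TilesOf_of_mem_Patches (substSeq_mem_Patches S _ m h) hD),
      ih (fun i => a (i + 1)), Set.image_image, lamProd_succ']
    simp only [smul_smul]

lemma diam_smul_image_le (r : ℝ) (hr : 0 ≤ r) {s : Set (Pt d)}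
    (hs : Bornology.IsBounded s) {C : ℝ} (hC : Metric.diam s ≤ C) (hC0 : 0 ≤ C) :
    Metric.diam ((fun p : Pt d => r • p) '' s) ≤ r * C := by
  apply Metric.diam_le_of_forall_dist_le (by positivity)
  rintro _ ⟨p, hp, rfl⟩ _ ⟨q, hq, rfl⟩
  rw [dist_smul₀, Real.norm_of_nonneg hr]
  exact mul_le_mul_of_nonneg_left (le_trans (Metric.dist_le_diam_of_mem hs hp hq) hC) hr

end Aux4
section Aux5

variable {d k l : ℕ} {X : Set (Patch d)}

/-- All entries positive. -/
def AllPos {l : ℕ} (M : Matrix (Fin l) (Fin l) ℕ) : Prop := ∀ p q, 0 < M p q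

/-- Every column has a positive entry. -/
def NoZeroCol {l : ℕ} (M : Matrix (Fin l) (Fin l) ℕ) : Prop := ∀ q, ∃ p, 0 < M p q

lemma matSeq_zero (A : Fin k → Matrix (Fin l) (Fin l) ℕ) (a : ℕ → Fin k) :
    matSeq A a 0 = 1 := rfl

lemma matSeq_succ (A : Fin k → Matrix (Fin l) (Fin l) ℕ) (a : ℕ → Fin k) (m : ℕ) :
    matSeq A a (m + 1) = A (a 0) * matSeq A (fun i => a (i + 1)) m := rfl

lemma matSeq_congr (A : Fin k → Matrix (Fin l) (Fin l) ℕ) {a b : ℕ → Fin k} {m : ℕ}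
    (h : ∀ i < m, a i = b i) : matSeq A a m = matSeq A b m := by
  induction m generalizing a b with
  | zero => rfl
  | succ m ih =>
    rw [matSeq_succ, matSeq_succ, h 0 (Nat.succ_pos _),
      ih (fun i hi => h (i + 1) (Nat.succ_lt_succ hi))]

lemma matSeq_add (A : Fin k → Matrix (Fin l) (Fin l) ℕ) (a : ℕ → Fin k) (p q : ℕ) :
    matSeq A a (p + q) = matSeq A a p * matSeq A (fun i => a (i + p)) q := by
  induction p generalizing a with
  | zero =>
    simp only [Nat.zero_add, matSeq_zero, Matrix.one_mul]
    exact matSeq_congr A (fun i _ => by norm_num)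
  | succ p ih =>
    have h1 : p + 1 + q = (p + q) + 1 := by omega
    have h2 : (fun i => (fun j => a (j + 1)) (i + p)) = (fun i => a (i + (p + 1))) := by
      funext i; congr 1
    rw [h1, matSeq_succ, ih (fun i => a (i + 1)), h2, matSeq_succ, Matrix.mul_assoc]

lemma NoZeroCol.one : NoZeroCol (1 : Matrix (Fin l) (Fin l) ℕ) := by
  intro q
  exact ⟨q, by simp [Matrix.one_apply]⟩

lemma NoZeroCol.mul {M N : Matrix (Fin l) (Fin l) ℕ} (hM : NoZeroCol M) (hN : NoZeroCol N) :
    NoZeroCol (M * N) := by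
  intro q
  obtain ⟨r, hr⟩ := hN q
  obtain ⟨p, hp⟩ := hM r
  refine ⟨p, ?_⟩
  rw [Matrix.mul_apply]
  have : 0 < M p r * N r q := Nat.mul_pos hp hr
  exact lt_of_lt_of_le this (Finset.single_le_sum (f := fun i => M p i * N i q)
    (fun i _ => Nat.zero_le _) (Finset.mem_univ r))

lemma AllPos.mul_noZeroCol {M N : Matrix (Fin l) (Fin l) ℕ} (hM : AllPos M) (hN : NoZeroCol N) :
    AllPos (M * N) := by
  intro p q
  obtain ⟨r, hr⟩ := hN q
  rw [Matrix.mul_apply]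
  have : 0 < M p r * N r q := Nat.mul_pos (hM p r) hr
  exact lt_of_lt_of_le this (Finset.single_le_sum (f := fun i => M p i * N i q)
    (fun i _ => Nat.zero_le _) (Finset.mem_univ r))

lemma matSeq_noZeroCol (A : Fin k → Matrix (Fin l) (Fin l) ℕ)
    (hA : ∀ j, NoZeroCol (A j)) (a : ℕ → Fin k) (m : ℕ) : NoZeroCol (matSeq A a m) := by
  induction m generalizing a with
  | zero => exact NoZeroCol.one
  | succ m ih => exact (hA (a 0)).mul (ih _)

lemma allPos_extend (A : Fin k → Matrix (Fin l) (Fin l) ℕ)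
    (hA : ∀ j, NoZeroCol (A j)) (a : ℕ → Fin k) {m m' : ℕ} (hmm : m ≤ m')
    (h : AllPos (matSeq A a m)) : AllPos (matSeq A a m') := by
  obtain ⟨j, rfl⟩ := Nat.exists_eq_add_of_le hmm
  rw [matSeq_add]
  exact h.mul_noZeroCol (matSeq_noZeroCol A hA _ _)

lemma exists_uniform_N (hk : 0 < k) (A : Fin k → Matrix (Fin l) (Fin l) ℕ)
    (hA : ∀ j, NoZeroCol (A j)) (hprim : ∀ b : ℕ → Fin k, SeqPrimitive A b) :
    ∃ N : ℕ, ∀ w : ℕ → Fin k, AllPos (matSeq A w (N + 1)) := by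
  by_contra hcon
  push_neg at hcon
  set C : ℕ → Set (ℕ → Fin k) := fun N => {w | ¬ AllPos (matSeq A w (N + 1))} with hC
  have hne : ∀ N, (C N).Nonempty := fun N => hcon N
  have hdec : ∀ N, C (N + 1) ⊆ C N := by
    intro N w hw
    intro hpos
    exact hw (allPos_extend A hA w (by omega) hpos)
  have hclosed : ∀ N, IsClosed (C N) := by
    intro N
    rw [← isOpen_compl_iff]
    rw [isOpen_iff_forall_mem_open]
    intro w hw
    refine ⟨⋂ i ∈ Finset.range (N + 1), (fun w' : ℕ → Fin k => w' i) ⁻¹' {w i}, ?_, ?_, ?_⟩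
    · intro w' hw'
      simp only [Set.mem_iInter, Set.mem_preimage, Set.mem_singleton_iff] at hw'
      simp only [Set.mem_compl_iff, hC, Set.mem_setOf_eq, not_not]
      have : matSeq A w' (N + 1) = matSeq A w (N + 1) :=
        matSeq_congr A (fun i hi => hw' i (Finset.mem_range.2 hi))
      rw [this]
      simpa [hC, not_not] using hw
    · exact isOpen_biInter_finset (fun i _ =>
        (continuous_apply i).isOpen_preimage _ (isOpen_discrete _))
    · simp
  have hcompact : IsCompact (C 0) := (hclosed 0).isCompact
  obtain ⟨b, hb⟩ := IsCompact.nonempty_iInter_of_sequence_nonempty_isCompact_isClosed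
    C hdec hne hcompact hclosed
  obtain ⟨N, hN⟩ := hprim b 0
  have hb0 : b ∈ C N := by
    simpa using Set.mem_iInter.1 hb N
  apply hb0
  intro p q
  have := hN p q
  have heq : matSeq A (fun m => b (0 + m)) (N + 1) = matSeq A b (N + 1) :=
    matSeq_congr A (fun i _ => by norm_num)
  rwa [heq] at this

end Aux5
section Aux6

variable {d k l : ℕ} {X : Set (Patch d)}

lemma substPatch_singleton (Su : Substitution d X) (E : Set (Pt d)) :
    substPatch Su {E} = Su.map E := by
  simp [substPatch]

lemma map_mem_Patches (Su : Substitution d X) {E : Set (Pt d)} (hE : E ∈ TilesOf X) :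
    Su.map E ∈ Patches X := by
  have := Su.maps_patches {E} (singleton_mem_Patches hE)
  simpa using this

lemma map_nonempty (hX : ∀ x ∈ X, IsTiling x) (Su : Substitution d X) {E : Set (Pt d)}
    (hE : E ∈ TilesOf X) : (Su.map E).Nonempty := by
  have hne : E.Nonempty := (isTile_of_mem_TilesOf hX hE).2.1.nonempty
  obtain ⟨p, hp⟩ := hne
  have : Su.lam • p ∈ psupp (Su.map E) := by
    rw [Su.supp_eq E hE]
    exact ⟨p, hp, rfl⟩
  rcases mem_psupp.1 this with ⟨T, hT, -⟩
  exact ⟨T, hT⟩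

lemma structMat_noZeroCol (hX : ∀ x ∈ X, IsTiling x) (Dp : Fin l → Set (Pt d))
    (hDp : IsPrototileBasis X Dp) (Su : Substitution d X) :
    NoZeroCol (structMat Dp Su) := by
  intro q
  obtain ⟨T, hT⟩ := map_nonempty hX Su (hDp.1 q)
  have hTX : T ∈ TilesOf X := mem_TilesOf_of_mem_Patches (map_mem_Patches Su (hDp.1 q)) hT
  obtain ⟨i, t, hit⟩ := hDp.2.2 T hTX
  refine ⟨i, ?_⟩
  have hfin : {D | D ∈ Su.map (Dp q) ∧ ∃ t : Pt d, D = tileTrans t (Dp i)}.Finite :=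
    (map_mem_Patches Su (hDp.1 q)).1.subset (fun D hD => hD.1)
  rw [structMat]
  exact (Set.ncard_pos hfin).2 ⟨T, hT, t, hit.symm⟩

lemma exists_copy_of_structMat_pos {Dp : Fin l → Set (Pt d)} {Su : Substitution d X}
    {i j : Fin l} (h : 0 < structMat Dp Su i j) :
    ∃ t : Pt d, tileTrans t (Dp i) ∈ Su.map (Dp j) := by
  obtain ⟨T, hT⟩ := Set.nonempty_of_ncard_ne_zero h.ne'
  obtain ⟨hTmem, t, rfl⟩ := hT
  exact ⟨t, hTmem⟩

lemma mem_substPatch_of {Su : Substitution d X} {x : Patch d} {E Q : Set (Pt d)}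
    (hE : E ∈ x) (hQ : Q ∈ Su.map E) : Q ∈ substPatch Su x := by
  simp only [substPatch, Set.mem_iUnion]
  exact ⟨E, hE, hQ⟩

lemma exists_copy_of_matSeq_pos (S : Fin k → Substitution d X) (Dp : Fin l → Set (Pt d))
    (a : ℕ → Fin k) (m : ℕ) {i q : Fin l}
    (h : 0 < matSeq (fun j => structMat Dp (S j)) a m i q) :
    ∃ t : Pt d, tileTrans t (Dp i) ∈ substSeq S a m {Dp q} := by
  induction m generalizing a i q with
  | zero =>
    rw [matSeq_zero] at h
    have hiq : i = q := by
      by_contra hne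
      rw [Matrix.one_apply_ne hne] at h
      exact lt_irrefl 0 h
    subst hiq
    exact ⟨0, by rw [tileTrans_zero]; exact Set.mem_singleton _⟩
  | succ m ih =>
    rw [matSeq_succ, Matrix.mul_apply] at h
    obtain ⟨r, -, hr⟩ := Finset.exists_ne_zero_of_sum_ne_zero h.ne'
    have h1 : 0 < structMat Dp (S (a 0)) i r := Nat.pos_of_ne_zero (fun hz => hr (by simp [hz]))
    have h2 : 0 < matSeq (fun j => structMat Dp (S j)) (fun i => a (i + 1)) m r q :=
      Nat.pos_of_ne_zero (fun hz => hr (by simp [hz]))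
    obtain ⟨u, hu⟩ := ih (fun i => a (i + 1)) h2
    obtain ⟨s, hs⟩ := exists_copy_of_structMat_pos h1
    refine ⟨(S (a 0)).lam • u + s, ?_⟩
    rw [substSeq_succ]
    have hmem : tileTrans ((S (a 0)).lam • u) (tileTrans s (Dp i)) ∈
        (S (a 0)).map (tileTrans u (Dp r)) := by
      rw [(S (a 0)).equivar u (Dp r)]
      exact mem_patchTrans.2 ⟨tileTrans s (Dp i), hs, rfl⟩
    rw [tileTrans_tileTrans] at hmem
    exact mem_substPatch_of hu hmem

end Aux6
section Aux7

variable {d k l : ℕ} {X : Set (Patch d)}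

lemma interior_biUnion_closed_empty (F : Finset (Set (Pt d)))
    (h : ∀ A ∈ F, IsClosed A ∧ interior A = ∅) : interior (⋃ A ∈ F, A) = ∅ := by
  classical
  induction F using Finset.induction_on with
  | empty => simp
  | insert _ _ hBF ih =>
    rename_i B F
    rw [Finset.set_biUnion_insert]
    set T := ⋃ A ∈ F, A with hT
    have hB := h B (Finset.mem_insert_self B F)
    have hint : interior T = ∅ := ih (fun A hA => h A (Finset.mem_insert_of_mem hA))
    set U := interior (B ∪ T) with hU
    have hUopen : IsOpen U := isOpen_interior
    have hUsub : U ⊆ B ∪ T := interior_subset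
    have h1 : U \ B ⊆ interior T := by
      apply interior_maximal
      · intro p hp
        rcases hUsub hp.1 with h' | h'
        · exact absurd h' hp.2
        · exact h'
      · exact hUopen.sdiff hB.1
    have h2 : U ⊆ B := by
      intro p hp
      by_contra hpB
      have : p ∈ interior T := h1 ⟨hp, hpB⟩
      rw [hint] at this
      exact this
    have : U ⊆ interior B := interior_maximal h2 hUopen
    rw [hB.2] at this
    exact Set.eq_empty_iff_forall_notMem.2 (fun p hp => this hp)

lemma interior_diff_interior_empty {Q : Set (Pt d)} :
    interior (Q \ interior Q) = ∅ := by
  apply Set.eq_empty_iff_forall_notMem.2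
  intro p hp
  have h1 : p ∈ interior Q := interior_mono Set.diff_subset hp
  have h2 : p ∈ Q \ interior Q := interior_subset hp
  exact h2.2 h1

lemma exists_interior_overlap {y' : Patch d} (hfin : y'.Finite)
    (hcl : ∀ Q' ∈ y', IsClosed Q') {Q : Set (Pt d)} (hQint : (interior Q).Nonempty)
    (hQsub : Q ⊆ psupp y') :
    ∃ Q' ∈ y', (interior Q ∩ interior Q').Nonempty := by
  classical
  by_contra hcon
  push_neg at hcon
  have hdisj : ∀ Q' ∈ y', interior Q ∩ interior Q' = ∅ := hcon
  set F : Finset (Set (Pt d)) := hfin.toFinset.image (fun Q' => Q' \ interior Q') with hF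
  have hcov : interior Q ⊆ ⋃ A ∈ F, A := by
    intro p hp
    have hpQ : p ∈ Q := interior_subset hp
    rcases mem_psupp.1 (hQsub hpQ) with ⟨Q', hQ', hpQ'⟩
    have hpnint : p ∉ interior Q' := by
      intro hpint
      have : p ∈ interior Q ∩ interior Q' := ⟨hp, hpint⟩
      rw [hdisj Q' hQ'] at this
      exact this
    exact Set.mem_biUnion (Finset.mem_image_of_mem _ (hfin.mem_toFinset.2 hQ'))
      ⟨hpQ', hpnint⟩
  have hempty : interior (⋃ A ∈ F, A) = ∅ := by
    apply interior_biUnion_closed_empty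
    intro A hA
    rcases Finset.mem_image.1 hA with ⟨Q', hQ', rfl⟩
    exact ⟨(hcl Q' (hfin.mem_toFinset.1 hQ')).sdiff isOpen_interior,
      interior_diff_interior_empty⟩
  have : interior Q ⊆ interior (⋃ A ∈ F, A) :=
    interior_maximal hcov isOpen_interior
  rw [hempty] at this
  obtain ⟨p, hp⟩ := hQint
  exact this hp

end Aux7
section Aux8

open Pointwise in
lemma volume_tileTrans {d : ℕ} (t : Pt d) (s : Set (Pt d)) :
    volume (tileTrans t s) = volume s := by
  have : tileTrans t s = t +ᵥ s := rfl
  rw [this, measure_vadd]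

lemma finite_tiles_inter {d l : ℕ} {X : Set (Patch d)} (hX : ∀ x ∈ X, IsTiling x) (hl : 0 < l)
    (Dp : Fin l → Set (Pt d)) (hDp : IsPrototileBasis X Dp)
    {x : Patch d} (hx : x ∈ X) (c : Pt d) {ρ δ : ℝ}
    (hδ : ∀ i, Metric.diam (Dp i) ≤ δ) :
    {Q | Q ∈ x ∧ (Q ∩ Metric.closedBall c ρ).Nonempty}.Finite := by
  classical
  set T := {Q | Q ∈ x ∧ (Q ∩ Metric.closedBall c ρ).Nonempty} with hT
  have htilesOf : ∀ Q ∈ T, Q ∈ TilesOf X := fun Q hQ => ⟨x, hx, hQ.1⟩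
  have htile : ∀ Q ∈ T, IsTile Q := fun Q hQ => isTile_of_mem_TilesOf hX (htilesOf Q hQ)
  have hdiam : ∀ Q ∈ T, Metric.diam Q ≤ δ := by
    intro Q hQ
    obtain ⟨i, t, rfl⟩ := hDp.2.2 Q (htilesOf Q hQ)
    rw [diam_tileTrans]
    exact hδ i
  have hsub : ∀ Q ∈ T, Q ⊆ Metric.closedBall c (ρ + δ) := by
    intro Q hQ p hp
    obtain ⟨q, hqQ, hqB⟩ := hQ.2
    rw [Metric.mem_closedBall]
    calc dist p c ≤ dist p q + dist q c := dist_triangle p q c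
    _ ≤ δ + ρ := add_le_add
        (le_trans (Metric.dist_le_diam_of_mem (htile Q hQ).1.isBounded hp hqQ) (hdiam Q hQ))
        (Metric.mem_closedBall.1 hqB)
    _ = ρ + δ := add_comm _ _
  obtain ⟨i₀, -, hi₀⟩ := Finset.exists_min_image (Finset.univ : Finset (Fin l))
    (fun i => volume (interior (Dp i))) ⟨⟨0, hl⟩, Finset.mem_univ _⟩
  set v := volume (interior (Dp i₀)) with hv
  have hv0 : 0 < v := isOpen_interior.measure_pos volume
    (interior_nonempty_of_isTile (isTile_of_mem_TilesOf hX (hDp.1 i₀)))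
  have hvtop : v < ⊤ := lt_of_le_of_lt (measure_mono interior_subset)
    (isTile_of_mem_TilesOf hX (hDp.1 i₀)).1.measure_lt_top
  have hvol : ∀ Q ∈ T, v ≤ volume (interior Q) := by
    intro Q hQ
    obtain ⟨i, t, rfl⟩ := hDp.2.2 Q (htilesOf Q hQ)
    rw [interior_tileTrans, volume_tileTrans]
    exact hi₀ i (Finset.mem_univ i)
  by_contra hinf
  have hinf' : T.Infinite := hinf
  set B := volume (Metric.closedBall c (ρ + δ)) with hB
  have hBtop : B < ⊤ := measure_closedBall_lt_top
  obtain ⟨n, hn⟩ := ENNReal.exists_nat_gt (ENNReal.div_lt_top hBtop.ne hv0.ne').ne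
  obtain ⟨F, hFsub, hFfin, hFcard⟩ := hinf'.exists_subset_ncard_eq n
  set FF := hFfin.toFinset with hFF
  have hmeas : volume (⋃ Q ∈ FF, interior Q) = ∑ Q ∈ FF, volume (interior Q) := by
    apply measure_biUnion_finset
    · intro Q hQ Q' hQ' hne
      have h1 : Q ∈ x := (hFsub (hFfin.mem_toFinset.1 hQ)).1
      have h2 : Q' ∈ x := (hFsub (hFfin.mem_toFinset.1 hQ')).1
      exact Set.disjoint_iff_inter_eq_empty.2 ((hX x hx).1.2 Q h1 Q' h2 hne)
    · exact fun Q _ => isOpen_interior.measurableSet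
  have hsum : (n : ENNReal) * v ≤ ∑ Q ∈ FF, volume (interior Q) := by
    have hcard : FF.card = n := by
      rw [← hFcard, Set.ncard_eq_toFinset_card F hFfin]
    calc (n : ENNReal) * v = FF.card • v := by rw [hcard, nsmul_eq_mul]
    _ ≤ ∑ Q ∈ FF, volume (interior Q) := Finset.card_nsmul_le_sum FF _ v
        (fun Q hQ => hvol Q (hFsub (hFfin.mem_toFinset.1 hQ)))
  have hle : volume (⋃ Q ∈ FF, interior Q) ≤ B := by
    apply measure_mono
    intro p hp
    rcases Set.mem_iUnion₂.1 hp with ⟨Q, hQ, hpQ⟩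
    exact hsub Q (hFsub (hFfin.mem_toFinset.1 hQ)) (interior_subset hpQ)
  have : (n : ENNReal) ≤ B / v :=
    (ENNReal.le_div_iff_mul_le (Or.inl hv0.ne') (Or.inl hvtop.ne)).2
      (le_trans hsum (le_trans hmeas.symm.le hle))
  exact absurd (lt_of_lt_of_le hn this) (lt_irrefl _)
end Aux8
section Aux9

lemma psupp_singleton {d : ℕ} (E : Set (Pt d)) : psupp ({E} : Patch d) = E := by
  simp [psupp]

lemma agree_of_dSigma_lt {k : ℕ} {a b : ℕ → Fin k} {n : ℕ} (hn : 0 < n)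
    (h : dSigma a b < 1 / (n : ℝ)) : ∀ i < n, a i = b i := by
  intro i hi
  by_cases hex : ∃ m, a m ≠ b m
  · rw [dSigma, dif_pos hex] at h
    by_contra hne
    have hfind : Nat.find hex ≤ i := Nat.find_le hne
    have hL : (Nat.find hex : ℝ) + 1 ≤ (n : ℝ) := by
      have : Nat.find hex + 1 ≤ n := by omega
      exact_mod_cast this
    have hpos : (0:ℝ) < (Nat.find hex : ℝ) + 1 := by positivity
    have := one_div_le_one_div_of_le hpos hL
    linarith
  · push_neg at hex
    exact hex i

lemma image_add_closedBall {d : ℕ} (t c : Pt d) (r : ℝ) :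
    (fun p : Pt d => t + p) '' Metric.closedBall c r = Metric.closedBall (t + c) r := by
  ext z
  constructor
  · rintro ⟨p, hp, rfl⟩
    rw [Metric.mem_closedBall] at hp ⊢
    rwa [dist_add_left]
  · intro hz
    refine ⟨z - t, ?_, ?_⟩
    · rw [Metric.mem_closedBall] at hz ⊢
      rw [dist_eq_norm] at hz ⊢
      have heq : z - t - c = z - (t + c) := by abel
      rw [heq]
      exact hz
    · show t + (z - t) = z
      abel

lemma isBounded_smul_image {d : ℕ} (r : ℝ) {s : Set (Pt d)} (hs : Bornology.IsBounded s) :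
    Bornology.IsBounded ((fun p : Pt d => r • p) '' s) := by
  obtain ⟨Rb, hRb⟩ := hs.subset_closedBall 0
  apply Bornology.IsBounded.subset (Metric.isBounded_closedBall (x := (0 : Pt d)) (r := |r| * Rb))
  rintro _ ⟨p, hp, rfl⟩
  rw [Metric.mem_closedBall, dist_zero_right, norm_smul, Real.norm_eq_abs]
  have hpRb : ‖p‖ ≤ Rb := by
    have := hRb hp
    rwa [Metric.mem_closedBall, dist_zero_right] at this
  exact mul_le_mul_of_nonneg_left hpRb (abs_nonneg r)

lemma diam_psupp_substSeq_le {d k : ℕ} {X : Set (Patch d)} (S : Fin k → Substitution d X)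
    (b : ℕ → Fin k) (m : ℕ) {E : Set (Pt d)} (hE : E ∈ TilesOf X)
    (hbE : Bornology.IsBounded E) {δ Λ : ℝ} (hδ0 : 0 ≤ δ)
    (hdiamE : Metric.diam E ≤ δ) (hΛ : ∀ j, (S j).lam ≤ Λ) :
    Metric.diam (psupp (substSeq S b m {E})) ≤ Λ ^ m * δ := by
  rw [psupp_substSeq S b m (singleton_mem_Patches hE), psupp_singleton]
  have h0 : 0 ≤ lamProd S b m := (lamProd_pos S b m).le
  have h1 : lamProd S b m ≤ Λ ^ m := by
    have hc : ∏ _i ∈ Finset.range m, Λ = Λ ^ m := by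
      rw [Finset.prod_const, Finset.card_range]
    rw [← hc, lamProd]
    exact Finset.prod_le_prod
      (fun i _ => le_of_lt (lt_trans one_pos (S (b i)).one_lt_lam))
      (fun i _ => hΛ (b i))
  exact (diam_smul_image_le _ h0 hbE hdiamE hδ0).trans (mul_le_mul_of_nonneg_right h1 hδ0)

lemma copy_in_supertile {d k l : ℕ} {X : Set (Patch d)}
    (S : Fin k → Substitution d X) (Dp : Fin l → Set (Pt d)) (hDp : IsPrototileBasis X Dp)
    {D : Set (Pt d)} (hD : D ∈ TilesOf X) {a b : ℕ → Fin k} {n N : ℕ}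
    (hab : ∀ i < n, a i = b i)
    (hN : ∀ w : ℕ → Fin k, AllPos (matSeq (fun j => structMat Dp (S j)) w (N + 1)))
    {x' : Patch d} (hx' : x' ⊆ substSeq S a n {D})
    {E : Set (Pt d)} (hE : E ∈ TilesOf X) :
    ∃ t : Pt d, patchTrans t x' ⊆ substSeq S b (n + (N + 1)) {E} := by
  obtain ⟨q, s, hsE⟩ := hDp.2.2 E hE
  obtain ⟨iD, tD, htD⟩ := hDp.2.2 D hD
  set w := fun i => b (i + n) with hw
  obtain ⟨u, hu⟩ := exists_copy_of_matSeq_pos S Dp w (N + 1) (hN w iD q)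
  have hDpD : tileTrans u (Dp iD) = tileTrans (u + -tD) D := by
    have harith : u + -tD + tD = u := by abel
    rw [← htD, tileTrans_tileTrans, harith]
  set v := lamProd S w (N + 1) • s + (u + -tD) with hv
  have h1 : tileTrans v D ∈ substSeq S w (N + 1) {E} := by
    rw [← hsE]
    have hsing : ({tileTrans s (Dp q)} : Patch d) = patchTrans s {Dp q} :=
      (patchTrans_singleton s _).symm
    rw [hsing, substSeq_patchTrans]
    apply mem_patchTrans.2
    refine ⟨tileTrans (u + -tD) D, ?_, ?_⟩
    · rw [← hDpD]; exact hu
    · rw [tileTrans_tileTrans, hv]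
  have h2 : substSeq S b n {tileTrans v D} ⊆ substSeq S b (n + (N + 1)) {E} := by
    rw [substSeq_add S b n (N + 1)]
    exact substSeq_mono S b n (Set.singleton_subset_iff.2 h1)
  refine ⟨lamProd S b n • v, ?_⟩
  have h3 : substSeq S b n {tileTrans v D}
      = patchTrans (lamProd S b n • v) (substSeq S b n {D}) := by
    have hsing : ({tileTrans v D} : Patch d) = patchTrans v {D} :=
      (patchTrans_singleton v _).symm
    rw [hsing, substSeq_patchTrans]
  have h4 : substSeq S b n {D} = substSeq S a n {D} :=
    substSeq_congr S (fun i hi => (hab i hi).symm) _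
  calc patchTrans (lamProd S b n • v) x'
      ⊆ patchTrans (lamProd S b n • v) (substSeq S a n {D}) := patchTrans_mono _ hx'
    _ = substSeq S b n {tileTrans v D} := by rw [h3, h4]
    _ ⊆ substSeq S b (n + (N + 1)) {E} := h2

end Aux9
/-- Uniform repetitivity: a patch of `S^n_ā(D)` occurs, within any ball of a uniform radius `R`, in every tiling of every `X_b̄` with `d_Σ(ā,b̄) < 1/n`. -/
theorem uniform_repetitivity
    {d l k : ℕ} (hd : 0 < d) (hl : 0 < l) (hk : 0 < k)
    (X : Set (Patch d)) (hX : ∀ x ∈ X, IsTiling x)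
    (hXinv : TransInvariant X) (hXflc : FLC X)
    (Dp : Fin l → Set (Pt d)) (hDp : IsPrototileBasis X Dp)
    (S : Fin k → Substitution d X)
    (D : Set (Pt d)) (hD : D ∈ TilesOf X)
    (a : ℕ → Fin k)
    (hprim : ∀ b : ℕ → Fin k, SeqPrimitive (fun i => structMat Dp (S i)) b)
    (x' : Patch d) (hx'fin : x'.Finite) (n : ℕ) (hn : 0 < n)
    (hx' : x' ⊆ substSeq S a n {D})
    :
    ∃ R : ℝ, 0 < R ∧ ∀ b : ℕ → Fin k, dSigma a b < 1 / (n : ℝ) →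
      ∀ x ∈ multiSpace S b D, ∀ c : Pt d,
        ∃ t : Pt d, patchTrans t x' ⊆ x ∧ psupp (patchTrans t x') ⊆ closedBall c R := by
  classical
  -- uniform primitivity exponent
  have hcol : ∀ j, NoZeroCol (structMat Dp (S j)) :=
    fun j => structMat_noZeroCol hX Dp hDp (S j)
  obtain ⟨N, hN⟩ := exists_uniform_N hk (fun j => structMat Dp (S j)) hcol hprim
  set M := n + (N + 1) with hM
  -- maximal dilatation factor
  obtain ⟨jm, -, hjm⟩ := Finset.exists_max_image (Finset.univ : Finset (Fin k))
    (fun j => (S j).lam) ⟨⟨0, hk⟩, Finset.mem_univ _⟩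
  set Λ := (S jm).lam with hΛdef
  have hΛ : ∀ j, (S j).lam ≤ Λ := fun j => hjm j (Finset.mem_univ j)
  have hΛ1 : 1 < Λ := (S jm).one_lt_lam
  have hΛpos : (0:ℝ) < Λ := lt_trans one_pos hΛ1
  -- maximal prototile diameter
  obtain ⟨im, -, him⟩ := Finset.exists_max_image (Finset.univ : Finset (Fin l))
    (fun i => Metric.diam (Dp i)) ⟨⟨0, hl⟩, Finset.mem_univ _⟩
  set δ := Metric.diam (Dp im) with hδdef
  have hδ : ∀ i, Metric.diam (Dp i) ≤ δ := fun i => him i (Finset.mem_univ i)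
  have hδpos : 0 < δ := by
    obtain ⟨p, hp⟩ := interior_nonempty_of_isTile (isTile_of_mem_TilesOf hX (hDp.1 im))
    obtain ⟨ε, hε, hball⟩ := Metric.isOpen_iff.1 isOpen_interior p hp
    set e : Pt d := EuclideanSpace.single ⟨0, hd⟩ (1:ℝ) with he_def
    have he : ‖e‖ = 1 := by rw [he_def, EuclideanSpace.norm_single]; norm_num
    have hp2 : p + (ε/2) • e ∈ Dp im := by
      apply interior_subset
      apply hball
      rw [Metric.mem_ball, dist_eq_norm]
      have heq : p + (ε/2) • e - p = (ε/2) • e := by abel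
      rw [heq, norm_smul, he, Real.norm_eq_abs, mul_one, abs_of_pos (by linarith)]
      linarith
    have hp1 : p ∈ Dp im := interior_subset hp
    have hb : Bornology.IsBounded (Dp im) :=
      (isTile_of_mem_TilesOf hX (hDp.1 im)).1.isBounded
    have hdd := Metric.dist_le_diam_of_mem hb hp1 hp2
    rw [dist_eq_norm] at hdd
    have heq : p - (p + (ε/2) • e) = -((ε/2) • e) := by abel
    rw [heq, norm_neg, norm_smul, he, Real.norm_eq_abs, mul_one,
      abs_of_pos (by linarith)] at hdd
    linarith
  have hD_diam : Metric.diam D ≤ δ := by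
    obtain ⟨iD, tD, htD⟩ := hDp.2.2 D hD
    rw [← htD, diam_tileTrans]; exact hδ iD
  set R := Λ ^ M * δ with hR
  have hRpos : 0 < R := by positivity
  refine ⟨R, hRpos, ?_⟩
  intro b hb x hxmem c
  have hab : ∀ i < n, a i = b i := agree_of_dSigma_lt hn hb
  -- the finite patch of x around the ball of radius R at c
  set y' := {Q | Q ∈ x ∧ (Q ∩ Metric.closedBall c R).Nonempty} with hy'
  have hy'fin : y'.Finite := finite_tiles_inter hX hl Dp hDp hxmem.1 c hδ
  have hy'sub : y' ⊆ x := fun Q hQ => hQ.1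
  have hxtiling : IsTiling x := hX x hxmem.1
  have hball_sub : Metric.closedBall c R ⊆ psupp y' := by
    intro p hp
    have hpx : p ∈ psupp x := by rw [hxtiling.2]; trivial
    rcases mem_psupp.1 hpx with ⟨Q, hQ, hpQ⟩
    exact mem_psupp.2 ⟨Q, ⟨hQ, ⟨p, hpQ, hp⟩⟩, hpQ⟩
  obtain ⟨m, hm0, t₀, ht₀⟩ := hxmem.2 y' hy'sub hy'fin
  -- a point of psupp lying near any translated ball point
  have himg : ∀ z ∈ Metric.closedBall c R, t₀ + z ∈ psupp (substSeq S b m {D}) := by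
    intro z hz
    have hz1 : z ∈ psupp y' := hball_sub hz
    have hz2 : t₀ + z ∈ psupp (patchTrans t₀ y') := by
      rw [psupp_patchTrans]; exact ⟨z, hz1, rfl⟩
    exact psupp_mono ht₀ hz2
  -- `M < m` by a diameter argument
  have hbig_bd : Bornology.IsBounded (psupp (substSeq S b m {D})) := by
    rw [psupp_substSeq S b m (singleton_mem_Patches hD), psupp_singleton]
    exact isBounded_smul_image _ (isTile_of_mem_TilesOf hX hD).1.isBounded
  have hbig_diam : Metric.diam (psupp (substSeq S b m {D})) ≤ Λ ^ m * δ :=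
    diam_psupp_substSeq_le S b m hD (isTile_of_mem_TilesOf hX hD).1.isBounded
      hδpos.le hD_diam hΛ
  have hMm : M < m := by
    set v : Pt d := EuclideanSpace.single ⟨0, hd⟩ R with hvdef
    have hvnorm : ‖v‖ = R := by
      rw [hvdef, EuclideanSpace.norm_single, Real.norm_eq_abs, abs_of_pos hRpos]
    have h1 : c + v ∈ Metric.closedBall c R := by
      rw [Metric.mem_closedBall, dist_self_add_left, hvnorm]
    have h2 : c - v ∈ Metric.closedBall c R := by
      rw [Metric.mem_closedBall, dist_self_sub_left, hvnorm]
    have hq1 := himg _ h1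
    have hq2 := himg _ h2
    have hdist : dist (t₀ + (c + v)) (t₀ + (c - v)) = 2 * R := by
      rw [dist_eq_norm]
      have heq : t₀ + (c + v) - (t₀ + (c - v)) = (2:ℝ) • v := by
        rw [two_smul]; abel
      rw [heq, norm_smul, hvnorm, Real.norm_eq_abs]
      norm_num
    have h2R : 2 * R ≤ Λ ^ m * δ := by
      rw [← hdist]
      exact le_trans (Metric.dist_le_diam_of_mem hbig_bd hq1 hq2) hbig_diam
    by_contra hle
    push_neg at hle
    have hpow : Λ ^ m ≤ Λ ^ M := pow_le_pow_right₀ hΛ1.le hle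
    have : Λ ^ m * δ ≤ R := by
      rw [hR]
      exact mul_le_mul_of_nonneg_right hpow hδpos.le
    linarith
  -- decompose the order-`m` supertile into order-`M` supertiles
  have hmeq : m = M + (m - M) := by omega
  have hdecomp : substSeq S b m {D}
      = substSeq S b M (substSeq S (fun i => b (i + M)) (m - M) {D}) := by
    conv_lhs => rw [hmeq]
    exact substSeq_add S b M (m - M) {D}
  set inner := substSeq S (fun i => b (i + M)) (m - M) {D} with hinner
  have hinnerP : inner ∈ Patches X :=
    substSeq_mem_Patches S _ _ (singleton_mem_Patches hD)
  -- locate the tile containing `c`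
  have hc : c ∈ psupp x := by rw [hxtiling.2]; trivial
  rcases mem_psupp.1 hc with ⟨P, hPx, hcP⟩
  have hPy' : P ∈ y' := ⟨hPx, ⟨c, hcP, Metric.mem_closedBall_self hRpos.le⟩⟩
  have hPmem : tileTrans t₀ P ∈ substSeq S b m {D} :=
    ht₀ (mem_patchTrans.2 ⟨P, hPy', rfl⟩)
  rw [hdecomp, substSeq_biUnion] at hPmem
  rcases Set.mem_iUnion₂.1 hPmem with ⟨E, hEinner, hPE⟩
  have hEX : E ∈ TilesOf X := mem_TilesOf_of_mem_Patches hinnerP hEinner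
  -- the copy of `x'` inside the order-`M` supertile of `E`
  obtain ⟨τ, hτ⟩ := copy_in_supertile S Dp hDp hD hab hN hx' hEX
  rw [← hM] at hτ
  -- support bound for the supertile piece
  have hdiamE : Metric.diam E ≤ δ := by
    obtain ⟨i, t, ht⟩ := hDp.2.2 E hEX
    rw [← ht, diam_tileTrans]; exact hδ i
  have hEbd : Bornology.IsBounded E := (isTile_of_mem_TilesOf hX hEX).1.isBounded
  have hpieceD : Metric.diam (psupp (substSeq S b M {E})) ≤ R := by
    rw [hR]
    exact diam_psupp_substSeq_le S b M hEX hEbd hδpos.le hdiamE hΛ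
  have hpiece_bd : Bornology.IsBounded (psupp (substSeq S b M {E})) := by
    rw [psupp_substSeq S b M (singleton_mem_Patches hEX), psupp_singleton]
    exact isBounded_smul_image _ hEbd
  have hcmem : t₀ + c ∈ psupp (substSeq S b M {E}) :=
    subset_psupp hPE ⟨c, hcP, rfl⟩
  have hpiece_sub : psupp (substSeq S b M {E}) ⊆ Metric.closedBall (t₀ + c) R := by
    intro z hz
    rw [Metric.mem_closedBall]
    exact le_trans (Metric.dist_le_diam_of_mem hpiece_bd hz hcmem) hpieceD
  -- the piece sits inside the big supertile
  have hpiece_big : substSeq S b M {E} ⊆ substSeq S b m {D} := by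
    rw [hdecomp]
    exact substSeq_mono S b M (Set.singleton_subset_iff.2 hEinner)
  have hbigP : substSeq S b m {D} ∈ Patches X :=
    substSeq_mem_Patches S b m (singleton_mem_Patches hD)
  obtain ⟨z0, hz0X, hbig_sub_z0⟩ := hbigP.2
  -- the translated patch `t₀ + y'` and its properties
  have hy'img_fin : (patchTrans t₀ y').Finite := hy'fin.image _
  have hy'img_cl : ∀ Q' ∈ patchTrans t₀ y', IsClosed Q' := by
    rintro Q' hQ'
    rcases mem_patchTrans.1 hQ' with ⟨P', hP', rfl⟩
    exact (isTile_tileTrans t₀ (hxtiling.1.1 P' (hy'sub hP'))).1.isClosed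
  have hball_sub' : Metric.closedBall (t₀ + c) R ⊆ psupp (patchTrans t₀ y') := by
    rw [psupp_patchTrans, ← image_add_closedBall t₀ c R]
    exact Set.image_mono hball_sub
  -- each tile of the copy is a tile of `t₀ + y'`
  have hcopy_sub : patchTrans τ x' ⊆ patchTrans t₀ y' := by
    intro Q hQ
    have hQpiece : Q ∈ substSeq S b M {E} := hτ hQ
    have hQbig : Q ∈ substSeq S b m {D} := hpiece_big hQpiece
    have hQtile : IsTile Q :=
      isTile_of_mem_TilesOf hX (mem_TilesOf_of_mem_Patches hbigP hQbig)
    have hQint : (interior Q).Nonempty := interior_nonempty_of_isTile hQtile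
    have hQsub : Q ⊆ psupp (patchTrans t₀ y') :=
      fun p hp => hball_sub' (hpiece_sub (subset_psupp hQpiece hp))
    obtain ⟨Q', hQ'mem, hover⟩ :=
      exists_interior_overlap hy'img_fin hy'img_cl hQint hQsub
    have hQ'big : Q' ∈ substSeq S b m {D} := ht₀ hQ'mem
    have hQQ' : Q = Q' := by
      by_contra hne
      have hdis := (hX z0 hz0X).1.2 Q (hbig_sub_z0 hQbig) Q' (hbig_sub_z0 hQ'big) hne
      rw [hdis] at hover
      exact Set.not_nonempty_empty hover
    rw [hQQ']
    exact hQ'mem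
  -- conclude
  refine ⟨-t₀ + τ, ?_, ?_⟩
  · have heq : patchTrans (-t₀ + τ) x' = patchTrans (-t₀) (patchTrans τ x') :=
      (patchTrans_patchTrans (-t₀) τ x').symm
    rw [heq]
    intro Q hQ
    rcases mem_patchTrans.1 hQ with ⟨Q0, hQ0, rfl⟩
    rcases mem_patchTrans.1 (hcopy_sub hQ0) with ⟨P', hP', rfl⟩
    rw [tileTrans_tileTrans]
    have hzero : -t₀ + t₀ = (0 : Pt d) := by abel
    rw [hzero, tileTrans_zero]
    exact hy'sub hP'
  · have h2 : psupp (patchTrans τ x') ⊆ Metric.closedBall (t₀ + c) R :=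
      fun p hp => hpiece_sub (psupp_mono hτ hp)
    have h3 : psupp (patchTrans (-t₀ + τ) x')
        = (fun p => -t₀ + p) '' psupp (patchTrans τ x') := by
      rw [← patchTrans_patchTrans (-t₀) τ x', psupp_patchTrans]
    rw [h3]
    rintro _ ⟨p, hp, rfl⟩
    have hpc := h2 hp
    rw [Metric.mem_closedBall] at hpc ⊢
    have heq : -t₀ + p - c = p - (t₀ + c) := by abel
    rw [dist_eq_norm, heq, ← dist_eq_norm]
    exact hpc

end
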